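/- arXiv:1606.08995 — 7 statements merged into one kernel-verified Lean document; each statement's English description precedes it below -/
import Mathlib

section
/- Let M be a gcd-monoid and let a, b, a', b', c in M satisfy a·b' = b·a'. If the left gcd of a and b is 1 and the left gcd of a' and c is 1, then the left gcd of a and b·c is 1. -/
universe u

/-- `a` left-divides `b`. -/
def LeftDvd {M : Type*} [Monoid M] (a b : M) : Prop := ∃ x, a * x = b

/-- `a` right-divides `b`. -/
def RightDvd' {M : Type*} [Monoid M] (a b : M) : Prop := ∃ x, x * a = b

/-- `m` is a right lcm of `a` and `b` (least upper bound for left divisibility). -/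
def IsRightLcm {M : Type*} [Monoid M] (a b m : M) : Prop :=
  LeftDvd a m ∧ LeftDvd b m ∧ ∀ c, LeftDvd a c → LeftDvd b c → LeftDvd m c

/-- `m` is a left lcm of `a` and `b` (least upper bound for right divisibility). -/
def IsLeftLcm {M : Type*} [Monoid M] (a b m : M) : Prop :=
  RightDvd' a m ∧ RightDvd' b m ∧ ∀ c, RightDvd' a c → RightDvd' b c → RightDvd' m c

/-- `g` is a left gcd of `a` and `b` (greatest lower bound for left divisibility). -/
def IsLeftGcd {M : Type*} [Monoid M] (a b g : M) : Prop :=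
  LeftDvd g a ∧ LeftDvd g b ∧ ∀ x, LeftDvd x a → LeftDvd x b → LeftDvd x g

/-- `g` is a right gcd of `a` and `b` (greatest lower bound for right divisibility). -/
def IsRightGcd {M : Type*} [Monoid M] (a b g : M) : Prop :=
  RightDvd' g a ∧ RightDvd' g b ∧ ∀ x, RightDvd' x a → RightDvd' x b → RightDvd' x g

/-- A quadruple admits a central cross. -/
def CentralCross {M : Type*} [Monoid M] (a₁ a₂ a₃ a₄ : M) : Prop :=
  ∃ x₁ x₂ x₃ x₄ : M, a₁ = x₁ * x₂ ∧ a₂ = x₃ * x₂ ∧ a₃ = x₃ * x₄ ∧ a₄ = x₁ * x₄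

/-- Any two elements with a common right multiple admit a right lcm. -/
lemma exists_right_lcm {M : Type*} [CancelMonoid M]
    (hunit : ∀ a b : M, a * b = 1 → a = 1)
    (hgcdL : ∀ a b : M, ∃ g, IsLeftGcd a b g)
    (hgcdR : ∀ a b : M, ∃ g, IsRightGcd a b g)
    (a b m : M) (hm1 : LeftDvd a m) (hm2 : LeftDvd b m) :
    ∃ l, IsRightLcm a b l := by
  obtain ⟨p, hp⟩ := hm1
  obtain ⟨q, hq⟩ := hm2
  obtain ⟨g, ⟨p₀, hp₀⟩, ⟨q₀, hq₀⟩, hg3⟩ := hgcdR p q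
  have heq : a * p₀ = b * q₀ := by
    have : a * p₀ * g = b * q₀ * g := by
      rw [mul_assoc, mul_assoc, hp₀, hq₀, hp, hq]
    exact mul_right_cancel this
  refine ⟨a * p₀, ⟨p₀, rfl⟩, ⟨q₀, heq.symm⟩, ?_⟩
  rintro n ⟨s, hs⟩ ⟨t, ht⟩
  obtain ⟨d, ⟨e, hde⟩, hd2, hd3⟩ := hgcdL (a * p₀) n
  obtain ⟨u, hu⟩ := hd3 a ⟨p₀, rfl⟩ ⟨s, hs⟩
  obtain ⟨v, hv⟩ := hd3 b ⟨q₀, heq.symm⟩ ⟨t, ht⟩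
  have hue : u * e = p₀ := by
    have : a * (u * e) = a * p₀ := by rw [← mul_assoc, hu, hde]
    exact mul_left_cancel this
  have hve : v * e = q₀ := by
    have : b * (v * e) = b * q₀ := by rw [← mul_assoc, hv, hde, heq]
    exact mul_left_cancel this
  obtain ⟨w, hw⟩ := hg3 (e * g) ⟨u, by rw [← mul_assoc, hue, hp₀]⟩
    ⟨v, by rw [← mul_assoc, hve, hq₀]⟩
  have hwe : w * e = 1 := by
    have : (w * e) * g = 1 * g := by rw [mul_assoc, hw, one_mul]
    exact mul_right_cancel this
  have hw1 : w = 1 := hunit _ _ hwe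
  have he1 : e = 1 := by rw [hw1, one_mul] at hwe; exact hwe
  rw [he1, mul_one] at hde
  exact hde ▸ hd2

theorem stmt_1 {M : Type*} [CancelMonoid M]
    (hunit : ∀ a b : M, a * b = 1 → a = 1)
    (hgcdL : ∀ a b : M, ∃ g, IsLeftGcd a b g)
    (hgcdR : ∀ a b : M, ∃ g, IsRightGcd a b g)
    (a b a' b' c : M) (h : a * b' = b * a')
    (h1 : IsLeftGcd a b 1) (h2 : IsLeftGcd a' c 1) :
    IsLeftGcd a (b * c) 1 := by
  refine ⟨⟨a, one_mul a⟩, ⟨b * c, one_mul _⟩, ?_⟩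
  rintro x ⟨u, hu⟩ ⟨v, hv⟩
  -- x and b have the common right multiple b*c, so they admit a right lcm l
  obtain ⟨l, ⟨z, hz⟩, ⟨y, hy⟩, hl3⟩ := exists_right_lcm hunit hgcdL hgcdR x b (b * c)
    ⟨v, hv⟩ ⟨c, rfl⟩
  -- b*a' = a*b' is a common right multiple of x and b, so l divides it
  obtain ⟨s, hs⟩ := hl3 (b * a') ⟨u * b', by rw [← mul_assoc, hu, h]⟩ ⟨a', rfl⟩
  -- b*c is a common right multiple of x and b, so l divides it
  obtain ⟨t, ht⟩ := hl3 (b * c) ⟨v, hv⟩ ⟨c, rfl⟩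
  -- hence y divides both a' and c
  have hya' : LeftDvd y a' := ⟨s, by
    have : b * (y * s) = b * a' := by rw [← mul_assoc, hy, hs]
    exact mul_left_cancel this⟩
  have hyc : LeftDvd y c := ⟨t, by
    have : b * (y * t) = b * c := by rw [← mul_assoc, hy, ht]
    exact mul_left_cancel this⟩
  obtain ⟨r, hr⟩ := h2.2.2 y hya' hyc
  have hy1 : y = 1 := hunit _ _ hr
  -- so l = b, hence x divides b
  rw [hy1, mul_one] at hy
  have hxb : LeftDvd x b := ⟨z, by rw [hz, hy]⟩
  exact h1.2.2 x ⟨u, hu⟩ hxb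
end

section
/- Let M be a gcd-monoid and a, b, c, d in M satisfy a·d = b·c. Then a·d is the right lcm of a and b if and only if the right gcd of c and d is 1. -/
universe u

theorem stmt_2 {M : Type*} [CancelMonoid M]
    (hunit : ∀ a b : M, a * b = 1 → a = 1)
    (hgcdL : ∀ a b : M, ∃ g, IsLeftGcd a b g)
    (hgcdR : ∀ a b : M, ∃ g, IsRightGcd a b g)
    (a b c d : M) (h : a * d = b * c) :
    IsRightLcm a b (a * d) ↔ IsRightGcd c d 1 := by
  constructor
  · rintro ⟨-, -, hmin⟩
    obtain ⟨g, hg⟩ := hgcdR c d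
    obtain ⟨c₁, hc₁⟩ := hg.1
    obtain ⟨d₁, hd₁⟩ := hg.2.1
    have hcm : a * d₁ = b * c₁ := by
      apply mul_right_cancel (b := g)
      rw [mul_assoc, mul_assoc, hd₁, hc₁]; exact h
    obtain ⟨z, hz⟩ := hmin (a * d₁) ⟨d₁, rfl⟩ ⟨c₁, hcm.symm⟩
    have h1 : d * z = d₁ := mul_left_cancel (a := a) (by rw [← mul_assoc]; exact hz)
    have h2 : g * z = 1 := by
      apply mul_left_cancel (a := d₁)
      rw [← mul_assoc, hd₁, h1, mul_one]
    have hg1 : g = 1 := hunit _ _ h2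
    rw [hg1] at hg
    exact hg
  · rintro ⟨-, -, hmin⟩
    refine ⟨⟨d, rfl⟩, ⟨c, h.symm⟩, ?_⟩
    rintro m ⟨x, hx⟩ ⟨y, hy⟩
    obtain ⟨g, ⟨s, hs⟩, hg2, hg3⟩ := hgcdL (a * d) m
    obtain ⟨x₀, hx₀⟩ := hg3 a ⟨d, rfl⟩ ⟨x, hx⟩
    obtain ⟨y₀, hy₀⟩ := hg3 b ⟨c, h.symm⟩ ⟨y, hy⟩
    have hxs : x₀ * s = d :=
      mul_left_cancel (a := a) (by rw [← mul_assoc, hx₀]; exact hs)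
    have hys : y₀ * s = c :=
      mul_left_cancel (a := b) (by rw [← mul_assoc, hy₀, hs]; exact h)
    obtain ⟨w, hw⟩ := hmin s ⟨y₀, hys⟩ ⟨x₀, hxs⟩
    have hw1 : w = 1 := hunit _ _ hw
    have hs1 : s = 1 := by rw [hw1, one_mul] at hw; exact hw
    have hxd : x₀ = d := by rw [hs1, mul_one] at hxs; exact hxs
    obtain ⟨t, ht⟩ := hg2
    exact ⟨t, by rw [← hxd, hx₀]; exact ht⟩
end

section
/- Let M be a gcd-monoid that admits a length function λ : M → ℕ satisfying λ(ab) = λ(a) + λ(b) for all a, b and λ(a) > 0 for a ≠ 1. Then for every a in M, if the image of a in the enveloping group U(M) equals the identity, then a = 1. -/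
universe u

theorem stmt_3 {M : Type*} [CancelMonoid M] {G : Type u} [Group G]
    (hunit : ∀ a b : M, a * b = 1 → a = 1)
    (hgcdL : ∀ a b : M, ∃ g, IsLeftGcd a b g)
    (hgcdR : ∀ a b : M, ∃ g, IsRightGcd a b g)
    (ι : M →* G)
    (hUniv : ∀ {H : Type u} [Group H] (f : M →* H), ∃! φ : G →* H, φ.comp ι = f)
    (lam : M → ℕ)
    (hadd : ∀ a b : M, lam (a * b) = lam a + lam b)
    (hpos : ∀ a : M, a ≠ 1 → 0 < lam a)
    (a : M) (ha : ι a = 1) : a = 1 := by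
  have h10 : lam 1 = 0 := by
    have := hadd 1 1
    simp at this
    omega
  let f : M →* Multiplicative (ULift.{u} ℤ) :=
    { toFun := fun m => Multiplicative.ofAdd ⟨(lam m : ℤ)⟩
      map_one' := by simp [h10]; rfl
      map_mul' := fun x y => by
        simp only [hadd, ← ofAdd_add]
        congr 1 }
  obtain ⟨φ, hφ, -⟩ := hUniv f
  have hfa : f a = 1 := by
    have : φ (ι a) = f a := DFunLike.congr_fun hφ a
    rw [ha, map_one] at this
    exact this.symm
  have hlam : lam a = 0 := by
    have : (Multiplicative.toAdd (f a)).down = 0 := by rw [hfa]; rfl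
    simpa [f] using this
  by_contra h
  exact absurd hlam (hpos a h).ne'
end

section
/- Let M be a gcd-monoid. Suppose that for all a, b, c, d in M with ι(a)·ι(b)⁻¹ = ι(c)·ι(d)⁻¹ in the enveloping group U(M) and with right gcd of a and b equal to 1 and right gcd of c and d equal to 1, one has a = c and b = d. Then for all a, b, c, d in M with ι(a)·ι(b)⁻¹ = ι(c)·ι(d)⁻¹ and right gcd of a and b equal to 1, a left-divides c and b left-divides d. -/
universe u

theorem stmt_5 {M : Type*} [CancelMonoid M] {G : Type u} [Group G]
    (hunit : ∀ a b : M, a * b = 1 → a = 1)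
    (hgcdL : ∀ a b : M, ∃ g, IsLeftGcd a b g)
    (hgcdR : ∀ a b : M, ∃ g, IsRightGcd a b g)
    (ι : M →* G)
    (hUniv : ∀ {H : Type u} [Group H] (f : M →* H), ∃! φ : G →* H, φ.comp ι = f)
    (huniq : ∀ a b c d : M, ι a * (ι b)⁻¹ = ι c * (ι d)⁻¹ →
      IsRightGcd a b 1 → IsRightGcd c d 1 → a = c ∧ b = d) :
    ∀ a b c d : M, ι a * (ι b)⁻¹ = ι c * (ι d)⁻¹ → IsRightGcd a b 1 →
      LeftDvd a c ∧ LeftDvd b d := by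
  intro a b c d heq hab
  obtain ⟨g, ⟨c', hc⟩, ⟨d', hd⟩, hmax⟩ := hgcdR c d
  have hgcd1 : IsRightGcd c' d' 1 := by
    refine ⟨⟨c', mul_one c'⟩, ⟨d', mul_one d'⟩, ?_⟩
    rintro x ⟨u, hu⟩ ⟨v, hv⟩
    obtain ⟨w, hw⟩ := hmax (x * g) ⟨u, by rw [← mul_assoc, hu, hc]⟩
      ⟨v, by rw [← mul_assoc, hv, hd]⟩
    have : w * x * g = 1 * g := by rw [mul_assoc, hw, one_mul]
    exact ⟨w, mul_right_cancel this⟩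
  have heq' : ι a * (ι b)⁻¹ = ι c' * (ι d')⁻¹ := by
    rw [heq, ← hc, ← hd, map_mul, map_mul, mul_inv_rev, mul_assoc,
      ← mul_assoc (ι g), mul_inv_cancel, one_mul]
  obtain ⟨ha, hb⟩ := huniq a b c' d' heq' hab hgcd1
  exact ⟨⟨g, by rw [← ha] at hc; exact hc⟩, ⟨g, by rw [← hb] at hd; exact hd⟩⟩
end

section
/- Let M be a gcd-monoid. If every quadruple (a,b,d,c) of elements of M with ι(a)·ι(b)⁻¹·ι(d)·ι(c)⁻¹ = 1 in the enveloping group U(M) admits a central cross, then: for all a, b, c in M with right gcd of a and b equal to 1, left gcd of b and c equal to 1, and ι(a)·ι(b)⁻¹·ι(c) lying in the image ι(M), one has b = 1. -/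
universe u

theorem stmt_8 {M : Type*} [CancelMonoid M] {G : Type u} [Group G]
    (hunit : ∀ a b : M, a * b = 1 → a = 1)
    (hgcdL : ∀ a b : M, ∃ g, IsLeftGcd a b g)
    (hgcdR : ∀ a b : M, ∃ g, IsRightGcd a b g)
    (ι : M →* G)
    (hUniv : ∀ {H : Type u} [Group H] (f : M →* H), ∃! φ : G →* H, φ.comp ι = f)
    (hcc : ∀ a b d c : M, ι a * (ι b)⁻¹ * ι d * (ι c)⁻¹ = 1 → CentralCross a b d c) :
    ∀ a b c : M, IsRightGcd a b 1 → IsLeftGcd b c 1 →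
      (∃ d : M, ι a * (ι b)⁻¹ * ι c = ι d) → b = 1 := by
  intro a b c hab hbc ⟨d, hd⟩
  obtain ⟨x₁, x₂, x₃, x₄, ha, hb, hc, -⟩ := hcc a b c d (by
    rw [hd]; group)
  have hx2 : x₂ = 1 := by
    obtain ⟨y, hy⟩ := hab.2.2 x₂ ⟨x₁, ha.symm⟩ ⟨x₃, hb.symm⟩
    have := hunit y x₂ hy
    rw [this, one_mul] at hy; exact hy
  have hx3 : x₃ = 1 := by
    obtain ⟨y, hy⟩ := hbc.2.2 x₃ ⟨x₂, hb.symm⟩ ⟨x₄, hc.symm⟩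
    exact hunit x₃ y hy
  rw [hb, hx2, hx3, one_mul]
end

section
/- Let M be a gcd-monoid embedding into its enveloping group U(M) (identify M with ι(M)), and assume every unital 4-multifraction admits a central cross, i.e., whenever x₀y₀⁻¹ = x₁y₁⁻¹ holds in U(M) for x₀,y₀,x₁,y₁ ∈ M, there exist x', y' ∈ M with x₀ = (x₀ ∧ y₀)x', y₀ = (x₀ ∧ y₀)y', x₁ = (x₁ ∧ y₁)x', y₁ = (x₁ ∧ y₁)y' (∧ the left gcd). Define g ≼ h in U(M) iff g⁻¹h ∈ M. Then any two elements g, h of U(M) admitting a common ≼-lower bound admit a greatest common ≼-lower bound. -/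
universe u

theorem stmt_10 {M : Type*} [CancelMonoid M] {G : Type u} [Group G]
    (hunit : ∀ a b : M, a * b = 1 → a = 1)
    (hgcdR : ∀ a b : M, ∃ g, IsRightGcd a b g)
    (ι : M →* G)
    (hUniv : ∀ {H : Type u} [Group H] (f : M →* H), ∃! φ : G →* H, φ.comp ι = f)
    (hinj : Function.Injective ι)
    (lgcd : M → M → M) (hlgcd : ∀ a b : M, IsLeftGcd a b (lgcd a b))
    (hcc : ∀ x₀ y₀ x₁ y₁ : M, ι x₀ * (ι y₀)⁻¹ = ι x₁ * (ι y₁)⁻¹ →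
      ∃ x' y' : M, x₀ = lgcd x₀ y₀ * x' ∧ y₀ = lgcd x₀ y₀ * y' ∧
        x₁ = lgcd x₁ y₁ * x' ∧ y₁ = lgcd x₁ y₁ * y')
    (g h : G) (hlb : ∃ f : G, (∃ m : M, f * ι m = g) ∧ ∃ m : M, f * ι m = h) :
    ∃ f₀ : G, (∃ m : M, f₀ * ι m = g) ∧ (∃ m : M, f₀ * ι m = h) ∧
      ∀ f₁ : G, (∃ m : M, f₁ * ι m = g) → (∃ m : M, f₁ * ι m = h) →
        ∃ m : M, f₁ * ι m = f₀ := by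
  obtain ⟨f, ⟨a, hfa⟩, ⟨b, hfb⟩⟩ := hlb
  obtain ⟨⟨a₁, ha₁⟩, ⟨b₁, hb₁⟩, hmax⟩ := hlgcd a b
  refine ⟨f * ι (lgcd a b), ⟨a₁, ?_⟩, ⟨b₁, ?_⟩, ?_⟩
  · rw [mul_assoc, ← map_mul, ha₁, hfa]
  · rw [mul_assoc, ← map_mul, hb₁, hfb]
  rintro f₁ ⟨x₀, hx₀⟩ ⟨x₁, hx₁⟩
  have hone : lgcd a₁ b₁ = 1 := by
    obtain ⟨⟨u, hu⟩, ⟨v, hv⟩, -⟩ := hlgcd a₁ b₁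
    obtain ⟨w, hw⟩ := hmax (lgcd a b * lgcd a₁ b₁)
      ⟨u, by rw [mul_assoc, hu, ha₁]⟩ ⟨v, by rw [mul_assoc, hv, hb₁]⟩
    refine hunit _ w (mul_left_cancel (a := lgcd a b) ?_)
    rw [← mul_assoc, hw, mul_one]
  have e1 : f₁ * ι x₀ = (f * ι (lgcd a b)) * ι a₁ := by
    rw [hx₀, mul_assoc, ← map_mul, ha₁, hfa]
  have e2 : f₁ * ι x₁ = (f * ι (lgcd a b)) * ι b₁ := by
    rw [hx₁, mul_assoc, ← map_mul, hb₁, hfb]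
  have k1 : ι x₀ * (ι a₁)⁻¹ = f₁⁻¹ * (f * ι (lgcd a b)) := by
    rw [mul_inv_eq_iff_eq_mul, mul_assoc, ← e1, inv_mul_cancel_left]
  have k2 : ι x₁ * (ι b₁)⁻¹ = f₁⁻¹ * (f * ι (lgcd a b)) := by
    rw [mul_inv_eq_iff_eq_mul, mul_assoc, ← e2, inv_mul_cancel_left]
  obtain ⟨s, t, hs₀, ht₀, hs₁, ht₁⟩ := hcc x₀ a₁ x₁ b₁ (k1.trans k2.symm)
  have A : ι x₀ = ι (lgcd x₀ a₁) * ι s := by rw [← map_mul, ← hs₀]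
  have B : ι x₁ = ι (lgcd x₁ b₁) * ι s := by rw [← map_mul, ← hs₁]
  have C : ι a₁ = ι (lgcd x₀ a₁) * ι t := by rw [← map_mul, ← ht₀]
  have D : ι b₁ = ι (lgcd x₁ b₁) * ι t := by rw [← map_mul, ← ht₁]
  have h2 : ι x₀ * (ι x₁)⁻¹ = ι a₁ * (ι b₁)⁻¹ := by
    rw [A, B, C, D]; group
  obtain ⟨p, q, hp, hq, hap, hbq⟩ := hcc x₀ x₁ a₁ b₁ h2
  rw [hone, one_mul] at hap
  refine ⟨lgcd x₀ x₁, ?_⟩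
  have hx0eq : ι x₀ = ι (lgcd x₀ x₁) * ι a₁ := by rw [hap, ← map_mul, ← hp]
  calc f₁ * ι (lgcd x₀ x₁)
      = f₁ * ι x₀ * (ι a₁)⁻¹ := by rw [hx0eq]; group
    _ = f * ι (lgcd a b) := by rw [e1]; group
end

section
/- Let M be a gcd-monoid. Suppose a₁, a₂, a₃, a₄ ∈ M admit a central cross (x₁,x₂,x₃,x₄), i.e., a₁ = x₁x₂, a₂ = x₃x₂, a₃ = x₃x₄, a₄ = x₁x₄. Suppose x ∈ M left-divides a₃ and x and a₂ admit a common right multiple with a₂·x' = x ∨ a₂, and set b₁ = a₁x', x·b₂ = a₂x', x·b₃ = a₃, b₄ = a₄ (with b₂, b₃ ∈ M). Then (b₁, b₂, b₃, b₄) admits a central cross. -/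
universe u

theorem stmt_15 {M : Type*} [CancelMonoid M]
    (hunit : ∀ a b : M, a * b = 1 → a = 1)
    (hgcdL : ∀ a b : M, ∃ g, IsLeftGcd a b g)
    (hgcdR : ∀ a b : M, ∃ g, IsRightGcd a b g)
    (hlcm : ∀ a b : M, (∃ c, LeftDvd a c ∧ LeftDvd b c) → ∃ m, IsRightLcm a b m)
    (a₁ a₂ a₃ a₄ x x' b₁ b₂ b₃ b₄ : M)
    (ha : CentralCross a₁ a₂ a₃ a₄)
    (hx : LeftDvd x a₃)
    (hxl : IsRightLcm x a₂ (a₂ * x'))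
    (hb₁ : b₁ = a₁ * x') (hb₂ : x * b₂ = a₂ * x') (hb₃ : x * b₃ = a₃)
    (hb₄ : b₄ = a₄) :
    CentralCross b₁ b₂ b₃ b₄ := by
  obtain ⟨x₁, x₂, x₃, x₄, h₁, h₂, h₃, h₄⟩ := ha
  -- lcm of x and x₃ exists: a₃ is a common right multiple
  obtain ⟨m, hmx, hmx₃, hml⟩ := hlcm x x₃ ⟨a₃, hx, ⟨x₄, h₃.symm⟩⟩
  obtain ⟨c, hc⟩ := hmx
  obtain ⟨d, hd⟩ := hmx₃
  -- m divides a₃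
  obtain ⟨g, hg⟩ := hml a₃ hx ⟨x₄, h₃.symm⟩
  -- m divides a₂ * x'
  obtain ⟨e, he⟩ := hml (a₂ * x') hxl.1 ⟨x₂ * x', by rw [← mul_assoc, ← h₂]⟩
  refine ⟨x₁ * d, e, c, g, ?_, ?_, ?_, ?_⟩
  · -- b₁ = x₁ * d * e
    have hde : d * e = x₂ * x' := by
      have : x₃ * (d * e) = x₃ * (x₂ * x') := by
        rw [← mul_assoc, hd, he, h₂, mul_assoc]
      exact mul_left_cancel this
    rw [hb₁, h₁, mul_assoc, mul_assoc, ← hde]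
  · -- b₂ = c * e
    have : x * (c * e) = x * b₂ := by rw [← mul_assoc, hc, he, hb₂]
    exact (mul_left_cancel this).symm
  · -- b₃ = c * g
    have : x * (c * g) = x * b₃ := by rw [← mul_assoc, hc, hg, hb₃]
    exact (mul_left_cancel this).symm
  · -- b₄ = x₁ * d * g
    have hdg : d * g = x₄ := by
      have : x₃ * (d * g) = x₃ * x₄ := by rw [← mul_assoc, hd, hg, h₃]
      exact mul_left_cancel this
    rw [hb₄, h₄, ← hdg, mul_assoc]
end
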